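/- arXiv:1411.3962 — 10 statements merged into one kernel-verified Lean document; each statement's English description precedes it below -/
import Mathlib

section
/- State-monad laws for the transformer P^t (part of the paper's Lemma 'P^t laws'): the lifted operations getP and putP satisfy (get-get) bindP getP (fun s => bindP getP (k s)) = bindP getP (fun s => k s s) for every k : St → St → m (Set C); (get-put) bindP getP putP = returnP (); (put-get) bindP (putP s) (fun _ => getP) = bindP (putP s) (fun _ => returnP s) for every s : St; and (put-put) bindP (putP s₁) (fun _ => putP s₂) = putP s₂ for all s₁ s₂ : St. -/
universe u

namespace Stmt2

variable (m : Type u → Type u) [Monad m] [∀ X : Type u, CompleteLattice (m X)]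

/-- The unit of the nondeterminism transformer `P^t`. -/
def returnP {A : Type u} (x : A) : m (Set A) := pure ({x} : Set A)

/-- The bind of the nondeterminism transformer `P^t`. -/
def bindP {A B : Type u} (X : m (Set A)) (f : A → m (Set B)) : m (Set B) :=
  X >>= fun S => ⨆ x ∈ S, f x

/-- The lifted `get` operation of `P^t`. -/
def getP {St : Type u} (get : m St) : m (Set St) :=
  get >>= fun s => pure ({s} : Set St)

/-- The lifted `put` operation of `P^t`. -/
def putP {St : Type u} (put : St → m PUnit.{u + 1}) (s : St) : m (Set PUnit.{u + 1}) :=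
  put s >>= fun _ => pure ({PUnit.unit} : Set PUnit.{u + 1})

/-- State-monad laws for the lifted operations `getP` and `putP` of the
nondeterminism transformer `P^t`: get-get, get-put, put-get and put-put. -/
theorem pt_state_laws [LawfulMonad m]
    (hbind_iSup : ∀ {ι : Sort*} {X Y : Type u} (Xs : ι → m X) (f : X → m Y),
      ((⨆ i, Xs i) >>= f) = ⨆ i, (Xs i >>= f))
    (hret_decomp : ∀ {A : Type u} (S : Set A),
      (pure S : m (Set A)) = ⨆ x ∈ S, (pure ({x} : Set A) : m (Set A)))
    (St : Type u) (get : m St) (put : St → m PUnit.{u + 1})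
    (hget_get : ∀ {C : Type u} (k : St → St → m C),
      (get >>= fun s => get >>= k s) = get >>= fun s => k s s)
    (hget_put : (get >>= put) = pure PUnit.unit)
    (hput_get : ∀ s : St,
      (put s >>= fun _ => get) = put s >>= fun _ => pure s)
    (hput_put : ∀ s₁ s₂ : St,
      (put s₁ >>= fun _ => put s₂) = put s₂) :
    -- (get-get)
    (∀ (C : Type u) (k : St → St → m (Set C)),
        bindP m (getP m get) (fun s => bindP m (getP m get) (k s))
          = bindP m (getP m get) (fun s => k s s)) ∧
    -- (get-put)
    (bindP m (getP m get) (putP m put) = returnP m PUnit.unit) ∧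
    -- (put-get)
    (∀ s : St,
        bindP m (putP m put s) (fun _ => getP m get)
          = bindP m (putP m put s) (fun _ => returnP m s)) ∧
    -- (put-put)
    (∀ s₁ s₂ : St,
        bindP m (putP m put s₁) (fun _ => putP m put s₂) = putP m put s₂) := by
  clear hbind_iSup hret_decomp
  have key : ∀ {A B : Type u} (x : m A) (f : A → m (Set B)),
      bindP m (x >>= fun a => pure ({a} : Set A)) f = x >>= f := by
    intro A B x f
    simp only [bindP, bind_assoc, pure_bind, Set.mem_singleton_iff, iSup_iSup_eq_left]
  refine ⟨?_, ?_, ?_, ?_⟩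
  · intro C k
    simp only [getP, key]
    exact hget_get k
  · simp only [getP, key, returnP]
    show (get >>= fun s => put s >>= fun _ => pure ({PUnit.unit} : Set PUnit.{u+1}))
        = pure ({PUnit.unit} : Set PUnit.{u+1})
    rw [← bind_assoc, hget_put, pure_bind]
  · intro s
    simp only [getP, putP, key, returnP]
    have h1 : (put s >>= fun _ => get >>= fun t => pure ({t} : Set St))
        = (put s >>= fun _ => get) >>= fun t => pure ({t} : Set St) := by
      rw [bind_assoc]
    have h2 : (put s >>= fun _ => (pure s : m St) >>= fun t => pure ({t} : Set St))
        = (put s >>= fun _ => (pure s : m St)) >>= fun t => pure ({t} : Set St) := by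
      rw [bind_assoc]
    calc (put s >>= fun _ => getP m get)
        = (put s >>= fun _ => get) >>= fun t => pure ({t} : Set St) := by
          simp only [getP]; rw [← h1]
      _ = (put s >>= fun _ => (pure s : m St)) >>= fun t => pure ({t} : Set St) := by
          rw [hput_get]
      _ = put s >>= fun _ => pure ({s} : Set St) := by rw [← h2]; simp
  · intro s₁ s₂
    simp only [putP, key]
    have : (put s₁ >>= fun _ => put s₂ >>= fun _ => pure ({PUnit.unit} : Set PUnit.{u+1}))
        = (put s₁ >>= fun _ => put s₂) >>= fun _ => pure ({PUnit.unit} : Set PUnit.{u+1}) := by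
      rw [bind_assoc]
    rw [this, hput_put]

end Stmt2
end

section
/- State-monad laws for the flow-sensitivity transformer F^t[s] (part of the paper's Lemma 'F^t laws'): with getF : s → m (Map s) := fun σ => return (single σ σ) and putF (σ' : s) : s → m (Map Unit) := fun σ => return (single () σ'), one has (get-get) bindF getF (fun a => bindF getF (k a)) = bindF getF (fun a => k a a) for every k : s → s → s → m (Map C); (get-put) bindF getF putF = returnF (); (put-get) bindF (putF σ) (fun _ => getF) = bindF (putF σ) (fun _ => returnF σ) for every σ : s; and (put-put) bindF (putF σ₁) (fun _ => putF σ₂) = putF σ₂ for all σ₁ σ₂ : s. -/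
universe u

namespace Stmt5

variable (s : Type u)

/-- The paper's finite maps `[A ↦ s]`, modeled as total functions into `WithBot s`
(`⊥` meaning "not in the domain"). -/
def Map (A : Type u) : Type u := A → WithBot s

open Classical in
/-- The singleton map `{x ↦ σ}`. -/
noncomputable def single {A : Type u} (x : A) (σ : s) : Map s A :=
  fun y => if y = x then (σ : WithBot s) else ⊥

variable (m : Type u → Type u) [Monad m] [∀ X : Type u, CompleteLattice (m X)]
variable [CompleteLattice s]

/-- The unit of the flow-sensitivity transformer `F^t[s]`. -/
noncomputable def returnF {A : Type u} (x : A) : s → m (Map s A) :=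
  fun σ => pure (single s x σ)

/-- The bind of the flow-sensitivity transformer `F^t[s]`. -/
noncomputable def bindF {A B : Type u} (X : s → m (Map s A))
    (f : A → s → m (Map s B)) : s → m (Map s B) :=
  fun σ₀ => X σ₀ >>= fun g => ⨆ x, WithBot.recBotCoe ⊥ (f x) (g x)

/-- The `get` operation of the flow-sensitivity transformer `F^t[s]`. -/
noncomputable def getF : s → m (Map s s) :=
  fun σ => pure (single s σ σ)

/-- The `put` operation of the flow-sensitivity transformer `F^t[s]`. -/
noncomputable def putF (σ' : s) : s → m (Map s PUnit.{u + 1}) :=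
  fun _ => pure (single s PUnit.unit σ')


lemma bind_pure_single [LawfulMonad m] {A B : Type u}
    (f : A → s → m (Map s B)) (a : A) (σ : s) :
    ((pure (single s a σ) : m (Map s A)) >>= fun g => ⨆ x, WithBot.recBotCoe ⊥ (f x) (g x))
      = f a σ := by
  rw [pure_bind]
  apply le_antisymm
  · apply iSup_le; intro x
    by_cases h : x = a
    · subst h; simp [single]
    · simp [single, h]
  · refine le_trans ?_ (le_iSup (fun x => (WithBot.recBotCoe ⊥ (f x) (single s a σ x) : m (Map s B))) a)
    simp [single]

lemma bindF_get [LawfulMonad m] {B : Type u} (f : s → s → m (Map s B)) (σ₀ : s) :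
    bindF s m (getF s m) f σ₀ = f σ₀ σ₀ :=
  bind_pure_single s m f σ₀ σ₀

lemma bindF_put [LawfulMonad m] {B : Type u} (f : PUnit.{u+1} → s → m (Map s B)) (σ σ₀ : s) :
    bindF s m (putF s m σ) f σ₀ = f PUnit.unit σ :=
  bind_pure_single s m f PUnit.unit σ

/-- State-monad laws for the flow-sensitivity transformer `F^t[s]`:
get-get, get-put, put-get and put-put. -/
theorem ft_state_laws [LawfulMonad m]
    (hbind_iSup : ∀ {ι : Sort*} {X Y : Type u} (Xs : ι → m X) (f : X → m Y),
      ((⨆ i, Xs i) >>= f) = ⨆ i, (Xs i >>= f))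
    (hret_decomp : ∀ {A : Type u} (g : Map s A),
      (pure g : m (Map s A))
        = ⨆ x, WithBot.recBotCoe ⊥ (fun σ => (pure (single s x σ) : m (Map s A))) (g x)) :
    -- (get-get)
    (∀ (C : Type u) (k : s → s → s → m (Map s C)),
        bindF s m (getF s m) (fun a => bindF s m (getF s m) (k a))
          = bindF s m (getF s m) (fun a => k a a)) ∧
    -- (get-put)
    (bindF s m (getF s m) (putF s m) = returnF s m PUnit.unit) ∧
    -- (put-get)
    (∀ σ : s,
        bindF s m (putF s m σ) (fun _ => getF s m)
          = bindF s m (putF s m σ) (fun _ => returnF s m σ)) ∧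
    -- (put-put)
    (∀ σ₁ σ₂ : s,
        bindF s m (putF s m σ₁) (fun _ => putF s m σ₂) = putF s m σ₂) := by
  refine ⟨?_, ?_, ?_, ?_⟩
  · intro C k
    funext σ₀
    rw [bindF_get, bindF_get, bindF_get]
  · funext σ₀
    rw [bindF_get]; rfl
  · intro σ
    funext σ₀
    rw [bindF_put, bindF_put]; rfl
  · intro σ₁ σ₂
    funext σ₀
    rw [bindF_put]; rfl

end Stmt5
end

section
/- Asymmetric commutation of Property (3) for the state transformer S^t (from the paper's Lemma 'Galois Transformer Properties'): for every f : A → m B, Π^{S^t}[Σ](γ₀ f) ≤ γ (S̃ f) pointwise; explicitly, γ (S̃ (α₀ (γ₀ f))) ≤ γ (S̃ f). -/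
universe u

namespace Stmt9

/-- The state transformer's lift of a monadic function:
`S̃(h)(p) := h p.1 >>= fun y => pure (y, p.2)`. -/
def stLift (m : Type u → Type u) [Monad m] (S : Type u) {A B : Type u}
    (h : A → m B) : (A × S) → m (B × S) :=
  fun p => h p.1 >>= fun y => pure (y, p.2)

/-- Asymmetric commutation of Property (3) for the state transformer `S^t`:
`Π^{S^t}[Σ](γ₀ f) ≤ γ (S̃ f)` pointwise, i.e. `γ (S̃ (α₀ (γ₀ f))) ≤ γ (S̃ f)`. -/
theorem st_asymmetric_commutation
    (m Sig : Type u → Type u) [Monad m] [LawfulMonad m]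
    [∀ X : Type u, Preorder (m X)] [∀ X : Type u, Preorder (Sig X)]
    (hbind_mono : ∀ (X Y : Type u) (t t' : m X) (k : X → m Y),
      t ≤ t' → (t >>= k) ≤ (t' >>= k))
    (A S B : Type u)
    (α₀ : (Sig A → Sig B) → (A → m B))
    (γ₀ : (A → m B) → (Sig A → Sig B))
    (hgc₀ : GaloisConnection α₀ γ₀)
    (α : (Sig (A × S) → Sig (B × S)) → ((A × S) → m (B × S)))
    (γ : ((A × S) → m (B × S)) → (Sig (A × S) → Sig (B × S)))
    (hgc : GaloisConnection α γ) :
    ∀ f : A → m B,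
      γ (stLift m S (α₀ (γ₀ f))) ≤ γ (stLift m S f) := by
  intro f
  apply hgc.monotone_u
  intro p
  exact hbind_mono _ _ _ _ _ (hgc₀.l_u_le f p.1)

end Stmt9
end

section
/- The nondeterminism transformer commutes with abstraction (commutation part of Property (1) for P^t in the paper's Lemma 'Galois Transformer Properties'): for every f : A → m₁ B, ᾱ (P^t[m₁] f) = P^t[m₂] (fun a => η (f a)); that is, P^t[m₂](α^m f) = α(P^t[m₁] f) where α^m f := η ∘ f. -/
universe u

namespace Stmt11

/-- The nondeterminism transformer's action on monadic functions:
`P^t[m](f)(x) := f x >>= fun y => return {y}`. -/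
def ptLift (m : Type u → Type u) [Monad m] {A B : Type u}
    (f : A → m B) : A → m (Set B) :=
  fun x => f x >>= fun y => pure ({y} : Set B)

/-- The `P^t`-lifted abstraction:
`ᾱ(g)(x) := η ((fun S => ⨆ a ∈ S, g a) {x})`. -/
def liftα {m₁ m₂ : Type u → Type u} [∀ X : Type u, CompleteLattice (m₁ X)]
    {A B : Type u} (η : ∀ X : Type u, m₁ X → m₂ X)
    (g : A → m₁ (Set B)) : A → m₂ (Set B) :=
  fun x => η (Set B) ((fun S : Set A => ⨆ a ∈ S, g a) {x})

/-- The nondeterminism transformer commutes with abstraction (commutation part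
of Property (1) for `P^t`): for a sup-preserving monad morphism `η`,
`ᾱ (P^t[m₁] f) = P^t[m₂] (fun a => η (f a))`, i.e. `P^t[m₂](α^m f) = α (P^t[m₁] f)`
where `α^m f := η ∘ f`. -/
theorem pt_commutes_with_abstraction
    (m₁ m₂ : Type u → Type u) [Monad m₁] [Monad m₂] [LawfulMonad m₁] [LawfulMonad m₂]
    [∀ X : Type u, CompleteLattice (m₁ X)] [∀ X : Type u, CompleteLattice (m₂ X)]
    (η : ∀ X : Type u, m₁ X → m₂ X)
    (hpure : ∀ (X : Type u) (x : X), η X (pure x) = pure x)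
    (hbind : ∀ (X Y : Type u) (t : m₁ X) (k : X → m₁ Y),
      η Y (t >>= k) = η X t >>= fun y => η Y (k y))
    (hsup : ∀ (X : Type u) {ι : Sort*} (f : ι → m₁ X),
      η X (⨆ i, f i) = ⨆ i, η X (f i))
    (A B : Type u) :
    ∀ f : A → m₁ B,
      liftα η (ptLift m₁ f) = ptLift m₂ (fun a => η B (f a)) := by
  intro f
  funext x
  simp only [liftα, ptLift, iSup_singleton]
  rw [hbind]
  simp [hpure]

end Stmt11
end

section
/- The nondeterminism transformer transports transition-system Galois connections (Property (3) for P^t of the paper's Lemma 'Galois Transformer Properties'): with ᾱ(F)(x) := α F {x} for F : Σ (Set A) → Σ (Set B), and γ̄(f)(ς) := γ (fun S => ⨆ x ∈ S, f x) ς for f : A → m (Set B), GaloisConnection ᾱ γ̄ holds between (Σ (Set A) → Σ (Set B)) and (A → m (Set B)), each ordered pointwise. -/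
universe u

namespace Stmt12

/-- The nondeterminism transformer transports transition-system Galois
connections (Property (3) for `P^t`): with `ᾱ(F)(x) := α F {x}` and
`γ̄(f)(ς) := γ (fun S => ⨆ x ∈ S, f x) ς`, the lifted maps form a Galois
connection between `Σ (Set A) → Σ (Set B)` and `A → m (Set B)`. -/
theorem pt_transports_transition_galois
    (m Sig : Type u → Type u)
    [∀ X : Type u, CompleteLattice (m X)] [∀ X : Type u, Preorder (Sig X)]
    (A B : Type u)
    (α : (Sig (Set A) → Sig (Set B)) → (Set A → m (Set B)))
    (γ : (Set A → m (Set B)) → (Sig (Set A) → Sig (Set B)))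
    (hgc : GaloisConnection α γ)
    (hdecomp : ∀ (F : Sig (Set A) → Sig (Set B)) (S : Set A),
      α F S = ⨆ x ∈ S, α F {x}) :
    GaloisConnection
      (fun (F : Sig (Set A) → Sig (Set B)) => fun (x : A) => α F {x})
      (fun (f : A → m (Set B)) => fun (ς : Sig (Set A)) =>
        γ (fun S => ⨆ x ∈ S, f x) ς) := by
  intro F f
  constructor
  · intro h
    have : F ≤ γ (fun S => ⨆ x ∈ S, f x) := (hgc F _).mp (by
      intro S
      rw [hdecomp]
      exact iSup₂_mono fun x _ => h x)
    exact this
  · intro h x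
    have h' : α F ≤ fun S => ⨆ x ∈ S, f x := (hgc F _).mpr h
    calc α F {x} ≤ ⨆ y ∈ ({x} : Set A), f y := h' {x}
      _ ≤ f x := by simp
end Stmt12
end

section
/- Asymmetric commutation of Property (3) for the nondeterminism transformer P^t (from the paper's Lemma 'Galois Transformer Properties'): for every f : A → m B, Π^{P^t}[Σ](γ₀ f) ≤ γ̄ (P^t f) pointwise; explicitly, γ̄ (P^t (α₀ (γ₀ f))) ≤ γ̄ (P^t f). -/
universe u

namespace Stmt13

/-- The nondeterminism transformer's lift of a monadic function:
`P^t(h)(x) := h x >>= fun y => return {y}`. -/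
def ptLift (m : Type u → Type u) [Monad m] {A B : Type u}
    (h : A → m B) : A → m (Set B) :=
  fun x => h x >>= fun y => pure ({y} : Set B)

/-- The `P^t`-lifted concretization:
`γ̄(f)(ς) := γ (fun S => ⨆ x ∈ S, f x) ς`. -/
def liftγ {m Sig : Type u → Type u} [∀ X : Type u, CompleteLattice (m X)]
    {A B : Type u}
    (γ : (Set A → m (Set B)) → (Sig (Set A) → Sig (Set B)))
    (f : A → m (Set B)) : Sig (Set A) → Sig (Set B) :=
  fun ς => γ (fun S => ⨆ x ∈ S, f x) ς

/-- Asymmetric commutation of Property (3) for the nondeterminism transformer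
`P^t`: `Π^{P^t}[Σ](γ₀ f) ≤ γ̄ (P^t f)` pointwise, i.e.
`γ̄ (P^t (α₀ (γ₀ f))) ≤ γ̄ (P^t f)`. -/
theorem pt_asymmetric_commutation
    (m Sig : Type u → Type u) [Monad m] [LawfulMonad m]
    [∀ X : Type u, CompleteLattice (m X)] [∀ X : Type u, Preorder (Sig X)]
    (hbind_mono : ∀ (X Y : Type u) (t t' : m X) (k : X → m Y),
      t ≤ t' → (t >>= k) ≤ (t' >>= k))
    (A B : Type u)
    (α₀ : (Sig A → Sig B) → (A → m B))
    (γ₀ : (A → m B) → (Sig A → Sig B))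
    (hgc₀ : GaloisConnection α₀ γ₀)
    (α : (Sig (Set A) → Sig (Set B)) → (Set A → m (Set B)))
    (γ : (Set A → m (Set B)) → (Sig (Set A) → Sig (Set B)))
    (hgc : GaloisConnection α γ) :
    ∀ f : A → m B,
      liftγ (Sig := Sig) γ (ptLift m (α₀ (γ₀ f))) ≤ liftγ (Sig := Sig) γ (ptLift m f) := by
  intro f ς
  apply hgc.monotone_u
  intro S
  apply iSup_mono; intro x
  apply iSup_mono; intro _
  exact hbind_mono _ _ _ _ _ (hgc₀.l_u_le f x)

end Stmt13
end

section
/- The flow-sensitivity transformer F^t[s] transports Galois connections between monads (Property (1) for F^t of the paper's Lemma 'Galois Transformer Properties'): with ᾱ(f)(x)(σ) := α^m (fun g : Map A => ⨆ y, WithBot.recBotCoe ⊥ (f y) (g y)) (single x σ) for f : A → s → m₁ (Map B), and γ̄(g)(x)(σ) := γ^m (fun h : Map A => ⨆ y, WithBot.recBotCoe ⊥ (g y) (h y)) (single x σ) for g : A → s → m₂ (Map B), GaloisConnection ᾱ γ̄ holds between (A → s → m₁ (Map B)) and (A → s → m₂ (Map B)) with the pointwise orders. -/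
universe u

namespace Stmt14

variable (s : Type u)

/-- The paper's finite maps `[A ↦ s]`, modeled as total functions into `WithBot s`. -/
def Map (A : Type u) : Type u := A → WithBot s

open Classical in
/-- The singleton map `{x ↦ σ}`. -/
noncomputable def single {A : Type u} (x : A) (σ : s) : Map s A :=
  fun y => if y = x then (σ : WithBot s) else ⊥

variable {m₁ m₂ : Type u → Type u}
  [∀ X : Type u, CompleteLattice (m₁ X)] [∀ X : Type u, CompleteLattice (m₂ X)]
  {A B : Type u}

/-- The `F^t[s]`-lifted abstraction:
`ᾱ(f)(x)(σ) := α^m (fun g => ⨆ y, WithBot.recBotCoe ⊥ (f y) (g y)) (single x σ)`,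
where `α^m h := η ∘ h`. -/
noncomputable def liftα (η : ∀ X : Type u, m₁ X → m₂ X)
    (f : A → s → m₁ (Map s B)) : A → s → m₂ (Map s B) :=
  fun x σ => η (Map s B)
    ((fun g : Map s A => ⨆ y, WithBot.recBotCoe ⊥ (f y) (g y)) (single s x σ))

/-- The `F^t[s]`-lifted concretization:
`γ̄(g)(x)(σ) := γ^m (fun h => ⨆ y, WithBot.recBotCoe ⊥ (g y) (h y)) (single x σ)`,
where `γ^m h := θ ∘ h`. -/
noncomputable def liftγ (θ : ∀ X : Type u, m₂ X → m₁ X)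
    (g : A → s → m₂ (Map s B)) : A → s → m₁ (Map s B) :=
  fun x σ => θ (Map s B)
    ((fun h : Map s A => ⨆ y, WithBot.recBotCoe ⊥ (g y) (h y)) (single s x σ))

/-- The flow-sensitivity transformer `F^t[s]` transports Galois connections
between monads (Property (1) for `F^t`): the lifted maps form a Galois
connection between `A → s → m₁ (Map B)` and `A → s → m₂ (Map B)`. -/
theorem ft_transports_galois [CompleteLattice s]
    [Monad m₁] [Monad m₂] [LawfulMonad m₁] [LawfulMonad m₂]
    (η : ∀ X : Type u, m₁ X → m₂ X) (θ : ∀ X : Type u, m₂ X → m₁ X)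
    (hηpure : ∀ (X : Type u) (x : X), η X (pure x) = pure x)
    (hηbind : ∀ (X Y : Type u) (t : m₁ X) (k : X → m₁ Y),
      η Y (t >>= k) = η X t >>= fun y => η Y (k y))
    (hθpure : ∀ (X : Type u) (x : X), θ X (pure x) = pure x)
    (hθbind : ∀ (X Y : Type u) (t : m₂ X) (k : X → m₂ Y),
      θ Y (t >>= k) = θ X t >>= fun y => θ Y (k y))
    (hηsup : ∀ (X : Type u) {ι : Sort*} (f : ι → m₁ X),
      η X (⨆ i, f i) = ⨆ i, η X (f i))
    (hθsup : ∀ (X : Type u) {ι : Sort*} (f : ι → m₂ X),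
      θ X (⨆ i, f i) = ⨆ i, θ X (f i))
    (hgc : ∀ X : Type u, GaloisConnection (η X) (θ X)) :
    GaloisConnection (liftα s (A := A) (B := B) η) (liftγ s θ) := by
  have key : ∀ {M : Type u → Type u} [∀ X, CompleteLattice (M X)]
      (f : A → s → M (Map s B)) (x : A) (σ : s),
      (⨆ y, WithBot.recBotCoe ⊥ (f y) (single s x σ y)) = f x σ := by
    intro M _ f x σ
    apply le_antisymm
    · apply iSup_le
      intro y
      by_cases h : y = x
      · subst h; simp [single]
      · simp [single, h]
    · have : f x σ = WithBot.recBotCoe (⊥ : M (Map s B)) (f x) (single s x σ x) := by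
        simp [single]
      rw [this]
      exact le_iSup (fun y => (WithBot.recBotCoe ⊥ (f y) (single s x σ y) : M (Map s B))) x
  intro f g
  constructor
  · intro h x σ
    have h' := h x σ
    simp only [liftα, liftγ, key] at *
    exact (hgc _).le_iff_le.mp h'
  · intro h x σ
    have h' := h x σ
    simp only [liftα, liftγ, key] at *
    exact (hgc _).le_iff_le.mpr h'

end Stmt14
end

section
/- The flow-sensitivity transformer commutes with abstraction (commutation part of Property (1) for F^t in the paper's Lemma 'Galois Transformer Properties'): for every f : A → m₁ B, ᾱ (F^t[m₁] f) = F^t[m₂] (fun a => η (f a)); that is, F^t[m₂](α^m f) = α(F^t[m₁] f) where α^m f := η ∘ f. -/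
universe u

namespace Stmt15

variable (s : Type u)

/-- The paper's finite maps `[A ↦ s]`, modeled as total functions into `WithBot s`. -/
def Map (A : Type u) : Type u := A → WithBot s

open Classical in
/-- The singleton map `{x ↦ σ}`. -/
noncomputable def single {A : Type u} (x : A) (σ : s) : Map s A :=
  fun y => if y = x then (σ : WithBot s) else ⊥

/-- The flow-sensitivity transformer's action on monadic functions:
`F^t[m](f)(x)(σ) := f x >>= fun y => return (single y σ)`. -/
noncomputable def ftLift (m : Type u → Type u) [Monad m] {A B : Type u}
    (f : A → m B) : A → s → m (Map s B) :=
  fun x σ => f x >>= fun y => pure (single s y σ)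

/-- The `F^t[s]`-lifted abstraction:
`ᾱ(g)(x)(σ) := η ((fun h => ⨆ y, WithBot.recBotCoe ⊥ (g y) (h y)) (single x σ))`. -/
noncomputable def liftα {m₁ m₂ : Type u → Type u}
    [∀ X : Type u, CompleteLattice (m₁ X)] {A B : Type u}
    (η : ∀ X : Type u, m₁ X → m₂ X)
    (g : A → s → m₁ (Map s B)) : A → s → m₂ (Map s B) :=
  fun x σ => η (Map s B)
    ((fun h : Map s A => ⨆ y, WithBot.recBotCoe ⊥ (g y) (h y)) (single s x σ))

/-- The flow-sensitivity transformer commutes with abstraction (commutation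
part of Property (1) for `F^t`): for a sup-preserving monad morphism `η`,
`ᾱ (F^t[m₁] f) = F^t[m₂] (fun a => η (f a))`, i.e.
`F^t[m₂](α^m f) = α (F^t[m₁] f)` where `α^m f := η ∘ f`. -/
theorem ft_commutes_with_abstraction [CompleteLattice s]
    (m₁ m₂ : Type u → Type u) [Monad m₁] [Monad m₂] [LawfulMonad m₁] [LawfulMonad m₂]
    [∀ X : Type u, CompleteLattice (m₁ X)] [∀ X : Type u, CompleteLattice (m₂ X)]
    (η : ∀ X : Type u, m₁ X → m₂ X)
    (hpure : ∀ (X : Type u) (x : X), η X (pure x) = pure x)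
    (hbind : ∀ (X Y : Type u) (t : m₁ X) (k : X → m₁ Y),
      η Y (t >>= k) = η X t >>= fun y => η Y (k y))
    (hsup : ∀ (X : Type u) {ι : Sort*} (f : ι → m₁ X),
      η X (⨆ i, f i) = ⨆ i, η X (f i))
    (A B : Type u) :
    ∀ f : A → m₁ B,
      liftα s η (ftLift s m₁ f) = ftLift s m₂ (fun a => η B (f a)) := by

  intro f
  funext x σ
  have hsup_eq : (⨆ y, WithBot.recBotCoe (⊥ : m₁ (Map s B)) (ftLift s m₁ f y) (single s x σ y))
      = ftLift s m₁ f x σ := by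
    apply le_antisymm
    · apply iSup_le
      intro y
      classical
      by_cases h : y = x
      · subst h; simp [single]
      · simp [single, h]
    · refine le_trans ?_ (le_iSup _ x)
      simp [single]
  show η _ _ = _
  simp only [hsup_eq]
  simp only [ftLift]
  rw [hbind]
  simp only [hpure]


end Stmt15
end

section
/- The flow-sensitivity transformer transports transition-system Galois connections (Property (3) for F^t of the paper's Lemma 'Galois Transformer Properties'): with ᾱ(F)(x)(σ) := α F (single x σ) for F : Σ (Map A) → Σ (Map B), and γ̄(f)(ς) := γ (fun g => ⨆ x, WithBot.recBotCoe ⊥ (f x) (g x)) ς for f : A → s → m (Map B), GaloisConnection ᾱ γ̄ holds between (Σ (Map A) → Σ (Map B)) and (A → s → m (Map B)), each ordered pointwise. -/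
universe u

namespace Stmt16

variable (s : Type u)

/-- The paper's finite maps `[A ↦ s]`, modeled as total functions into `WithBot s`. -/
def Map (A : Type u) : Type u := A → WithBot s

open Classical in
/-- The singleton map `{x ↦ σ}`. -/
noncomputable def single {A : Type u} (x : A) (σ : s) : Map s A :=
  fun y => if y = x then (σ : WithBot s) else ⊥

/-- The flow-sensitivity transformer transports transition-system Galois
connections (Property (3) for `F^t`): with `ᾱ(F)(x)(σ) := α F (single x σ)` and
`γ̄(f)(ς) := γ (fun g => ⨆ x, WithBot.recBotCoe ⊥ (f x) (g x)) ς`, the lifted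
maps form a Galois connection between `Σ (Map A) → Σ (Map B)` and
`A → s → m (Map B)`. -/
theorem ft_transports_transition_galois [CompleteLattice s]
    (m Sig : Type u → Type u)
    [∀ X : Type u, CompleteLattice (m X)] [∀ X : Type u, Preorder (Sig X)]
    (A B : Type u)
    (α : (Sig (Map s A) → Sig (Map s B)) → (Map s A → m (Map s B)))
    (γ : (Map s A → m (Map s B)) → (Sig (Map s A) → Sig (Map s B)))
    (hgc : GaloisConnection α γ)
    (hdecomp : ∀ (F : Sig (Map s A) → Sig (Map s B)) (g : Map s A),
      α F g = ⨆ x, WithBot.recBotCoe ⊥ (fun σ => α F (single s x σ)) (g x)) :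
    GaloisConnection
      (fun (F : Sig (Map s A) → Sig (Map s B)) => fun (x : A) (σ : s) =>
        α F (single s x σ))
      (fun (f : A → s → m (Map s B)) => fun (ς : Sig (Map s A)) =>
        γ (fun g => ⨆ x, WithBot.recBotCoe ⊥ (f x) (g x)) ς) := by
  intro F f
  constructor
  · intro h
    have := (hgc F (fun g => ⨆ x, WithBot.recBotCoe ⊥ (f x) (g x))).mp
    refine this ?_
    intro g
    rw [hdecomp F g]
    refine iSup_mono fun x => ?_
    cases hx : g x with
    | bot => simp
    | coe σ => simpa using h x σ
  · intro h x σ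
    have h2 : α F ≤ fun g => ⨆ x, WithBot.recBotCoe ⊥ (f x) (g x) :=
      (hgc F _).mpr h
    have h3 := h2 (single s x σ)
    refine le_trans h3 ?_
    refine iSup_le fun y => ?_
    unfold single
    by_cases hyx : y = x
    · subst hyx; simp
    · simp [hyx]

end Stmt16
end

section
/- Asymmetric commutation of Property (3) for the flow-sensitivity transformer F^t[s] (from the paper's Lemma 'Galois Transformer Properties'): for every f : A → m B, Π^{F^t}[Σ](γ₀ f) ≤ γ̄ (F^t f) pointwise; explicitly, γ̄ (F^t (α₀ (γ₀ f))) ≤ γ̄ (F^t f). -/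
universe u

namespace Stmt17

variable (s : Type u)

/-- The paper's finite maps `[A ↦ s]`, modeled as total functions into `WithBot s`. -/
def Map (A : Type u) : Type u := A → WithBot s

open Classical in
/-- The singleton map `{x ↦ σ}`. -/
noncomputable def single {A : Type u} (x : A) (σ : s) : Map s A :=
  fun y => if y = x then (σ : WithBot s) else ⊥

/-- The flow-sensitivity transformer's lift of a monadic function:
`F^t(h)(x)(σ) := h x >>= fun y => return (single y σ)`. -/
noncomputable def ftLift (m : Type u → Type u) [Monad m] {A B : Type u}
    (h : A → m B) : A → s → m (Map s B) :=
  fun x σ => h x >>= fun y => pure (single s y σ)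

/-- The `F^t[s]`-lifted concretization:
`γ̄(f)(ς) := γ (fun g => ⨆ x, WithBot.recBotCoe ⊥ (f x) (g x)) ς`. -/
noncomputable def liftγ {m Sig : Type u → Type u}
    [∀ X : Type u, CompleteLattice (m X)] {A B : Type u}
    (γ : (Map s A → m (Map s B)) → (Sig (Map s A) → Sig (Map s B)))
    (f : A → s → m (Map s B)) : Sig (Map s A) → Sig (Map s B) :=
  fun ς => γ (fun g => ⨆ x, WithBot.recBotCoe ⊥ (f x) (g x)) ς

/-- Asymmetric commutation of Property (3) for the flow-sensitivity transformer
`F^t[s]`: `Π^{F^t}[Σ](γ₀ f) ≤ γ̄ (F^t f)` pointwise, i.e.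
`γ̄ (F^t (α₀ (γ₀ f))) ≤ γ̄ (F^t f)`. -/
theorem ft_asymmetric_commutation [CompleteLattice s]
    (m Sig : Type u → Type u) [Monad m] [LawfulMonad m]
    [∀ X : Type u, CompleteLattice (m X)] [∀ X : Type u, Preorder (Sig X)]
    (hbind_mono : ∀ (X Y : Type u) (t t' : m X) (k : X → m Y),
      t ≤ t' → (t >>= k) ≤ (t' >>= k))
    (A B : Type u)
    (α₀ : (Sig A → Sig B) → (A → m B))
    (γ₀ : (A → m B) → (Sig A → Sig B))
    (hgc₀ : GaloisConnection α₀ γ₀)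
    (α : (Sig (Map s A) → Sig (Map s B)) → (Map s A → m (Map s B)))
    (γ : (Map s A → m (Map s B)) → (Sig (Map s A) → Sig (Map s B)))
    (hgc : GaloisConnection α γ) :
    ∀ f : A → m B,
      liftγ s (Sig := Sig) γ (ftLift s m (α₀ (γ₀ f)))
        ≤ liftγ s (Sig := Sig) γ (ftLift s m f) := by
  intro f ς
  have hle : α₀ (γ₀ f) ≤ f := hgc₀.l_u_le f
  apply hgc.monotone_u
  intro g
  refine iSup_mono fun x => ?_
  cases hg : g x with
  | bot => exact le_rfl
  | coe σ => exact hbind_mono _ _ _ _ _ (hle x)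

end Stmt17
end
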